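/- arXiv:1401.5141 — 4 statements merged into one kernel-verified Lean document; each statement's English description precedes it below -/
import Mathlib

section
/- Let K be a field of characteristic zero, a, b, c₀, …, cₙ ∈ K with a² - b² = 1, and set S = Σ_{j=0}^n cⱼ(x-y)^{2j} in A₁(K). Then the assignment f(x) = ax + by + S, f(y) = ay + bx + S extends to a K-algebra endomorphism of A₁(K), i.e., [f(y), f(x)] = 1. -/
open scoped BigOperators

variable (K : Type*) [Field K]

/-- Defining relation of the first Weyl algebra: `y*x = x*y + 1`. -/
inductive WeylRel : FreeAlgebra K (Fin 2) → FreeAlgebra K (Fin 2) → Prop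
  | rel : WeylRel (FreeAlgebra.ι K 1 * FreeAlgebra.ι K 0) (FreeAlgebra.ι K 0 * FreeAlgebra.ι K 1 + 1)

/-- The first Weyl algebra `A₁(K) = K⟨x,y⟩/(yx - xy - 1)`. -/
abbrev Weyl := RingQuot (WeylRel K)

/-- The generator `x` of `A₁(K)`. -/
abbrev wx : Weyl K := RingQuot.mkAlgHom K (WeylRel K) (FreeAlgebra.ι K 0)

/-- The generator `y` of `A₁(K)`. -/
abbrev wy : Weyl K := RingQuot.mkAlgHom K (WeylRel K) (FreeAlgebra.ι K 1)

section Helpers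

variable {R : Type*} [Ring R]

theorem pow_comm_aux (w u : R) (h : w * u = u * w + 1) :
    ∀ m : ℕ, w * u ^ m = u ^ m * w + m • u ^ (m - 1) := by
  intro m
  induction m with
  | zero => simp
  | succ m ih =>
    have hu : m • (u ^ (m - 1) * u) = m • u ^ m := by
      cases m with
      | zero => simp
      | succ k => rw [Nat.add_sub_cancel, ← pow_succ]
    calc w * u ^ (m + 1) = (w * u ^ m) * u := by rw [pow_succ, mul_assoc]
      _ = (u ^ m * w + m • u ^ (m - 1)) * u := by rw [ih]
      _ = u ^ m * (w * u) + m • (u ^ (m - 1) * u) := by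
          rw [add_mul, mul_assoc, smul_mul_assoc]
      _ = u ^ m * (u * w) + u ^ m + m • u ^ m := by
          rw [h, hu, mul_add, mul_one, add_assoc]
      _ = u ^ (m + 1) * w + (m + 1) • u ^ m := by
          rw [← mul_assoc, ← pow_succ, succ_nsmul]
          abel

variable [Algebra K R]

theorem sum_comm_aux (w u : R) (h : w * u = u * w + 1) (n : ℕ) (c : ℕ → K) :
    w * (∑ j ∈ Finset.range (n + 1), c j • u ^ (2 * j)) =
      (∑ j ∈ Finset.range (n + 1), c j • u ^ (2 * j)) * w +
        ∑ j ∈ Finset.range (n + 1), c j • ((2 * j) • u ^ (2 * j - 1)) := by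
  rw [Finset.mul_sum, Finset.sum_mul, ← Finset.sum_add_distrib]
  refine Finset.sum_congr rfl fun j _ => ?_
  rw [mul_smul_comm, pow_comm_aux w u h, smul_add, smul_mul_assoc]

theorem key (a b : K) (p q s t : R)
    (h1 : q * p = p * q + 1) (h2 : p * s = s * p + t) (h3 : q * s = s * q + t)
    (hab : a ^ 2 - b ^ 2 = 1) :
    (a • q + b • p + s) * (a • p + b • q + s) -
      (a • p + b • q + s) * (a • q + b • p + s) = 1 := by
  simp only [mul_add, add_mul, smul_mul_assoc, mul_smul_comm, smul_smul]
  rw [h1, h2, h3]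
  simp only [smul_add]
  match_scalars <;> (ring_nf; try linear_combination hab)

end Helpers

theorem weyl_comm : wy K * wx K = wx K * wy K + 1 := by
  have := RingQuot.mkAlgHom_rel K (WeylRel.rel (K := K))
  simpa [map_mul, map_add, map_one] using this

theorem hxu : wx K * (wx K - wy K) = (wx K - wy K) * wx K + 1 := by
  rw [mul_sub, sub_mul, weyl_comm]; abel

theorem hyu : wy K * (wx K - wy K) = (wx K - wy K) * wy K + 1 := by
  rw [mul_sub, sub_mul, weyl_comm]; abel

theorem stmt_2 [CharZero K] (n : ℕ) (a b : K) (c : ℕ → K) (hab : a ^ 2 - b ^ 2 = 1) :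
    (a • wy K + b • wx K + ∑ j ∈ Finset.range (n + 1), c j • (wx K - wy K) ^ (2 * j)) *
        (a • wx K + b • wy K + ∑ j ∈ Finset.range (n + 1), c j • (wx K - wy K) ^ (2 * j)) -
      (a • wx K + b • wy K + ∑ j ∈ Finset.range (n + 1), c j • (wx K - wy K) ^ (2 * j)) *
        (a • wy K + b • wx K + ∑ j ∈ Finset.range (n + 1), c j • (wx K - wy K) ^ (2 * j)) = 1 ∧
    ∃ f : Weyl K →ₐ[K] Weyl K,
      f (wx K) = a • wx K + b • wy K + ∑ j ∈ Finset.range (n + 1), c j • (wx K - wy K) ^ (2 * j) ∧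
      f (wy K) = a • wy K + b • wx K + ∑ j ∈ Finset.range (n + 1), c j • (wx K - wy K) ^ (2 * j) := by
  set S : Weyl K := ∑ j ∈ Finset.range (n + 1), c j • (wx K - wy K) ^ (2 * j) with hS
  set T : Weyl K := ∑ j ∈ Finset.range (n + 1), c j • ((2 * j) • (wx K - wy K) ^ (2 * j - 1))
    with hT
  have h2 : wx K * S = S * wx K + T :=
    sum_comm_aux K (wx K) (wx K - wy K) (hxu K) n c
  have h3 : wy K * S = S * wy K + T :=
    sum_comm_aux K (wy K) (wx K - wy K) (hyu K) n c
  have hmain : (a • wy K + b • wx K + S) * (a • wx K + b • wy K + S) -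
      (a • wx K + b • wy K + S) * (a • wy K + b • wx K + S) = 1 :=
    key K a b (wx K) (wy K) S T (weyl_comm K) h2 h3 hab
  refine ⟨hmain, ?_⟩
  -- the free-algebra images of the generators
  set X : Weyl K := a • wx K + b • wy K + S with hX
  set Y : Weyl K := a • wy K + b • wx K + S with hY
  have hrel : Y * X = X * Y + 1 :=
    (eq_add_of_sub_eq hmain).trans (add_comm _ _)
  let F : FreeAlgebra K (Fin 2) →ₐ[K] Weyl K := FreeAlgebra.lift K ![X, Y]
  have hF : ∀ ⦃r s : FreeAlgebra K (Fin 2)⦄, WeylRel K r s → F r = F s := by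
    intro r s h
    cases h
    simp only [F, map_mul, map_add, map_one, FreeAlgebra.lift_ι_apply]
    simpa using hrel
  refine ⟨RingQuot.liftAlgHom K ⟨F, hF⟩, ?_, ?_⟩ <;>
    simp [RingQuot.liftAlgHom_mkAlgHom_apply, F, FreeAlgebra.lift_ι_apply]
end

section
/- Let K be a field of characteristic zero, a, b ∈ K with a² - b² = 1 (so a - b ≠ 0), and cⱼ ∈ K. The endomorphism f of A₁(K) given by f(x) = ax + by + Σⱼ cⱼ(x-y)^{2j}, f(y) = ay + bx + Σⱼ cⱼ(x-y)^{2j} is an automorphism, with inverse given by f⁻¹(x) = ax - by + (b-a)·Σⱼ cⱼ((x-y)/(a-b))^{2j} and f⁻¹(y) = ay - bx + (b-a)·Σⱼ cⱼ((x-y)/(a-b))^{2j}. -/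
open scoped BigOperators

variable (K : Type*) [Field K]

lemma weyl_aux {R : Type*} [Ring R] (A B s : R) (h1 : B * A = A * B + 1)
    (h2 : s * (A - B) = (A - B) * s) : (B + s) * (A + s) = (A + s) * (B + s) + 1 := by
  have h3 : s * A = (A - B) * s + s * B := by rw [← h2]; noncomm_ring
  have e1 : (B + s) * (A + s) = B * A + B * s + s * A + s * s := by noncomm_ring
  have e2 : (A + s) * (B + s) + 1 = A * B + A * s + s * B + s * s + 1 := by noncomm_ring
  rw [e1, e2, h1, h3]; noncomm_ring

theorem stmt_4 [CharZero K] (n : ℕ) (a b : K) (c : ℕ → K) (hab : a ^ 2 - b ^ 2 = 1)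
    (f : Weyl K →ₐ[K] Weyl K)
    (hfx : f (wx K) = a • wx K + b • wy K + ∑ j ∈ Finset.range (n + 1), c j • (wx K - wy K) ^ (2 * j))
    (hfy : f (wy K) = a • wy K + b • wx K + ∑ j ∈ Finset.range (n + 1), c j • (wx K - wy K) ^ (2 * j)) :
    ∃ g : Weyl K →ₐ[K] Weyl K,
      (∀ u, g (f u) = u) ∧ (∀ u, f (g u) = u) ∧
      g (wx K) = a • wx K - b • wy K +
        (b - a) • ∑ j ∈ Finset.range (n + 1), c j • ((a - b)⁻¹ • (wx K - wy K)) ^ (2 * j) ∧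
      g (wy K) = a • wy K - b • wx K +
        (b - a) • ∑ j ∈ Finset.range (n + 1), c j • ((a - b)⁻¹ • (wx K - wy K)) ^ (2 * j) := by
  -- scalar facts
  have hmul : (a - b) * (a + b) = 1 := by ring_nf; linear_combination hab
  have hne : a - b ≠ 0 := left_ne_zero_of_mul_eq_one hmul
  have hinv : (a - b)⁻¹ = a + b := inv_eq_of_mul_eq_one_right hmul
  -- basic relation
  have hrel : wy K * wx K = wx K * wy K + 1 := by
    have h := RingQuot.mkAlgHom_rel K (WeylRel.rel (K := K))
    simpa only [map_mul, map_add, map_one] using h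
  set X := wx K with hX
  set Y := wy K with hY
  set S : Weyl K := ∑ j ∈ Finset.range (n + 1), c j • ((a + b) • (X - Y)) ^ (2 * j) with hS
  set X' : Weyl K := a • X - b • Y + (b - a) • S with hX'
  set Y' : Weyl K := a • Y - b • X + (b - a) • S with hY'
  have hcomm : Commute (X - Y) S := by
    apply Commute.sum_right
    intro j _
    exact (((Commute.refl (X - Y)).smul_right (a + b)).pow_right _).smul_right _
  -- key relation Y' * X' = X' * Y' + 1
  have hAB : (a • Y - b • X) * (a • X - b • Y) = (a • X - b • Y) * (a • Y - b • X) + 1 := by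
    simp only [sub_mul, mul_sub, smul_mul_smul, hrel, smul_add, smul_smul]
    match_scalars <;> try ring
    · linear_combination hab
  have hs : ((b - a) • S) * ((a • X - b • Y) - (a • Y - b • X))
      = ((a • X - b • Y) - (a • Y - b • X)) * ((b - a) • S) := by
    have h1 : (a • X - b • Y) - (a • Y - b • X) = (a + b) • (X - Y) := by module
    rw [h1]
    exact ((hcomm.symm.smul_left (b - a)).smul_right (a + b)).eq
  have key : Y' * X' = X' * Y' + 1 := by
    rw [hX', hY']
    exact weyl_aux _ _ _ hAB hs
  -- build g
  have hliftrel : ∀ ⦃u v : FreeAlgebra K (Fin 2)⦄, WeylRel K u v →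
      (FreeAlgebra.lift K ![X', Y']) u = (FreeAlgebra.lift K ![X', Y']) v := by
    rintro u v ⟨⟩
    simpa only [map_mul, map_add, map_one, FreeAlgebra.lift_ι_apply, Matrix.cons_val_zero,
      Matrix.cons_val_one, Matrix.head_cons] using key
  set g : Weyl K →ₐ[K] Weyl K := RingQuot.liftAlgHom K ⟨FreeAlgebra.lift K ![X', Y'], hliftrel⟩ with hg
  have hgx : g X = X' := by
    rw [hg, hX, wx]
    simp [RingQuot.liftAlgHom_mkAlgHom_apply, FreeAlgebra.lift_ι_apply]
  have hgy : g Y = Y' := by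
    rw [hg, hY, wy]
    simp [RingQuot.liftAlgHom_mkAlgHom_apply, FreeAlgebra.lift_ι_apply]
  -- generator criterion for being the identity
  have hcomp : ∀ (h : Weyl K →ₐ[K] Weyl K), h X = X → h Y = Y → ∀ u, h u = u := by
    intro h h0 h1 u
    have : h = AlgHom.id K (Weyl K) := by
      apply RingQuot.ringQuot_ext'
      apply FreeAlgebra.hom_ext
      funext i
      fin_cases i
      · simpa using h0
      · simpa using h1
    rw [this]; rfl
  -- auxiliary images
  have hgd : g (X - Y) = (a + b) • (X - Y) := by
    rw [map_sub, hgx, hgy, hX', hY']; module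
  have hgT : g (∑ j ∈ Finset.range (n + 1), c j • (X - Y) ^ (2 * j)) = S := by
    rw [hS]; simp only [map_sum, map_smul, map_pow, hgd]
  have hfw : f (X - Y) = (a - b) • (X - Y) := by
    rw [map_sub, hfx, hfy]; module
  have h1 : (a + b) • ((a - b) • (X - Y)) = X - Y := by
    rw [smul_smul, mul_comm, hmul, one_smul]
  have hfS : f S = ∑ j ∈ Finset.range (n + 1), c j • (X - Y) ^ (2 * j) := by
    rw [hS]; simp only [map_sum, map_smul, map_pow, hfw, h1]
  have hgfX : g (f X) = X := by
    rw [hfx, map_add, map_add, map_smul, map_smul, hgx, hgy, hgT, hX', hY']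
    match_scalars <;> first
      | ring1
      | linear_combination hab
      | linear_combination -hab
  have hgfY : g (f Y) = Y := by
    rw [hfy, map_add, map_add, map_smul, map_smul, hgx, hgy, hgT, hX', hY']
    match_scalars <;> first
      | ring1
      | linear_combination hab
      | linear_combination -hab
  have hfgX : f (g X) = X := by
    rw [hgx, hX', map_add, map_sub, map_smul, map_smul, map_smul, hfx, hfy, hfS]
    match_scalars <;> first
      | ring1
      | linear_combination hab
      | linear_combination -hab
  have hfgY : f (g Y) = Y := by
    rw [hgy, hY', map_add, map_sub, map_smul, map_smul, map_smul, hfx, hfy, hfS]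
    match_scalars <;> first
      | ring1
      | linear_combination hab
      | linear_combination -hab
  refine ⟨g, hcomp (g.comp f) hgfX hgfY, hcomp (f.comp g) hfgX hfgY, ?_, ?_⟩
  · rw [hgx, hX', hinv, hS]
  · rw [hgy, hY', hinv, hS]
end

section
/- Let K be a field with char(K) ≠ 2 and let β be the involution of A₁(K) with β(x) = x, β(y) = -y. Suppose P₀ ∈ A₁(K) satisfies β(P₀) = P₀. Then writing the (1,0)-leading term of P₀ in normal form as x^r g(y), the polynomial g lies in K[y²] (g is an even polynomial). -/
open scoped BigOperators

variable (K : Type*) [Field K]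

/-- `IsBetaInv β` says that `β` is the K-linear unital antiautomorphism-data of `A₁(K)`
determined by `β(x) = x`, `β(y) = -y`. -/
def IsBetaInv (β : Weyl K → Weyl K) : Prop :=
  (∀ u v, β (u + v) = β u + β v) ∧ (∀ (c : K) (u), β (c • u) = c • β u) ∧
  (∀ u v, β (u * v) = β v * β u) ∧ β 1 = 1 ∧ β (wx K) = wx K ∧ β (wy K) = -(wy K)


open MvPolynomial in
noncomputable def opX : Module.End K (MvPolynomial (Fin 2) K) :=
  LinearMap.mulLeft K (X 0)

open MvPolynomial in
noncomputable def opY : Module.End K (MvPolynomial (Fin 2) K) :=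
  LinearMap.mulLeft K (X 1) + (pderiv 0).toLinearMap

open MvPolynomial in
lemma opY_mul_opX : opY K * opX K = opX K * opY K + 1 := by
  apply LinearMap.ext
  intro f
  simp [opX, opY, Module.End.mul_apply, LinearMap.mulLeft_apply, pderiv_mul, pderiv_X_self]
  ring

noncomputable def rho : Weyl K →ₐ[K] Module.End K (MvPolynomial (Fin 2) K) :=
  RingQuot.liftAlgHom K ⟨FreeAlgebra.lift K ![opX K, opY K], by
    rintro _ _ ⟨⟩
    simp [FreeAlgebra.lift_ι_apply, opY_mul_opX]⟩

lemma rho_wx : rho K (wx K) = opX K := by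
  simp [rho, wx, RingQuot.liftAlgHom_mkAlgHom_apply, FreeAlgebra.lift_ι_apply]

lemma rho_wy : rho K (wy K) = opY K := by
  simp [rho, wy, RingQuot.liftAlgHom_mkAlgHom_apply, FreeAlgebra.lift_ι_apply]

open MvPolynomial in
lemma coeff_pderiv0 (f : MvPolynomial (Fin 2) K) (m : Fin 2 →₀ ℕ) :
    coeff m (pderiv 0 f) = (m 0 + 1) * coeff (m + Finsupp.single 0 1) f := by
  induction f using MvPolynomial.induction_on' with
  | monomial s c =>
    rw [pderiv_monomial, coeff_monomial, coeff_monomial]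
    by_cases h : s = m + Finsupp.single 0 1
    · subst h
      rw [if_pos (by ext d; simp [Finsupp.tsub_apply])]
      simp [mul_comm]
    · rw [if_neg h, mul_zero]
      by_cases h2 : s - Finsupp.single 0 1 = m
      · rw [if_pos h2]
        rcases Nat.eq_zero_or_pos (s 0) with h0 | h0
        · simp [h0]
        · exfalso
          apply h
          ext d
          have hd := DFunLike.congr_fun h2 d
          simp only [Finsupp.tsub_apply, Finsupp.add_apply] at hd ⊢
          by_cases hd0 : d = (0 : Fin 2)
          · subst hd0
            simp only [Finsupp.single_eq_same] at hd ⊢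
            omega
          · rw [Finsupp.single_eq_of_ne' (fun hc => hd0 hc.symm)] at hd ⊢
            omega
      · rw [if_neg h2]
  | add p q hp hq =>
    simp [hp, hq, mul_add]

open MvPolynomial in
lemma coeff_XX (m : Fin 2 →₀ ℕ) (i k : ℕ) :
    coeff m ((X 0 : MvPolynomial (Fin 2) K) ^ i * X 1 ^ k) =
      if Finsupp.single 0 i + Finsupp.single 1 k = m then 1 else 0 := by
  rw [X_pow_eq_monomial, X_pow_eq_monomial, monomial_mul, one_mul, coeff_monomial]

open MvPolynomial in
lemma key_s8 (j : ℕ) : ∀ (i : ℕ) (m : Fin 2 →₀ ℕ), i ≤ m 0 →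
    coeff m ((opY K ^ j) ((X 0 : MvPolynomial (Fin 2) K) ^ i)) =
      coeff m ((X 0 : MvPolynomial (Fin 2) K) ^ i * X 1 ^ j) := by
  induction j with
  | zero => intro i m _; simp
  | succ j ih =>
    intro i m him
    rw [pow_succ']
    have hg : (opY K * opY K ^ j) ((X 0 : MvPolynomial (Fin 2) K) ^ i) =
        X 1 * ((opY K ^ j) (X 0 ^ i)) + pderiv 0 ((opY K ^ j) (X 0 ^ i)) := by
      simp [opY, Module.End.mul_apply, LinearMap.mulLeft_apply]
    rw [hg, coeff_add]
    have h1 : coeff m (pderiv 0 ((opY K ^ j) ((X 0 : MvPolynomial (Fin 2) K) ^ i))) = 0 := by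
      rw [coeff_pderiv0, ih i (m + Finsupp.single 0 1) (by simp; omega), coeff_XX]
      rw [if_neg, mul_zero]
      intro hc
      have := DFunLike.congr_fun hc 0
      simp [Finsupp.single_apply] at this
      omega
    have hrhs : (X 0 : MvPolynomial (Fin 2) K) ^ i * X 1 ^ (j + 1) =
        X 1 * (X 0 ^ i * X 1 ^ j) := by ring
    rw [h1, add_zero, hrhs]
    classical
    rw [coeff_X_mul', coeff_X_mul']
    split
    · next h =>
      exact ih i (m - Finsupp.single 1 1) (by simpa [Finsupp.tsub_apply] using him)
    · rfl

lemma beta_pow {β : Weyl K → Weyl K} (hβ : IsBetaInv K β) (u : Weyl K) (n : ℕ) :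
    β (u ^ n) = (β u) ^ n := by
  induction n with
  | zero => simpa using hβ.2.2.2.1
  | succ n ih => rw [pow_succ, hβ.2.2.1, ih, pow_succ']

open MvPolynomial Finsupp in
theorem stmt_8 (hK : (2 : K) ≠ 0) (β : Weyl K → Weyl K) (hβ : IsBetaInv K β)
    (hinv : ∀ u, β (β u) = u) (P₀ : Weyl K) (hP : β P₀ = P₀)
    (a : (ℕ × ℕ) →₀ K) (hP0 : P₀ = ∑ p ∈ a.support, a p • (wx K ^ p.1 * wy K ^ p.2))
    (r : ℕ) (hr : ∀ p ∈ a.support, p.1 ≤ r) (hr' : ∃ p ∈ a.support, p.1 = r) :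
    ∀ j : ℕ, Odd j → a (r, j) = 0 := by
  intro j hj
  classical
  set t : Fin 2 →₀ ℕ := Finsupp.single 0 r + Finsupp.single 1 j with ht
  have ht0 : t 0 = r := by simp [ht, Finsupp.single_apply]
  -- the linear map version of β
  let βL : Weyl K →ₗ[K] Weyl K :=
    { toFun := β, map_add' := hβ.1, map_smul' := hβ.2.1 }
  have hβL : ∀ u, βL u = β u := fun _ => rfl
  -- value of rho on a normal monomial, applied to 1
  have hmono : ∀ i k : ℕ, (rho K (wx K ^ i * wy K ^ k)) 1 =
      (X 0 : MvPolynomial (Fin 2) K) ^ i * X 1 ^ k := by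
    intro i k
    rw [map_mul, map_pow, map_pow, rho_wx, rho_wy]
    have h1 : ((opY K) ^ k) (1 : MvPolynomial (Fin 2) K) = X 1 ^ k := by
      apply MvPolynomial.ext
      intro m
      have := key_s8 K k 0 m (Nat.zero_le _)
      simpa using this
    rw [Module.End.mul_apply, h1, opX, LinearMap.pow_mulLeft, LinearMap.mulLeft_apply]
  -- coefficient of t in rho P₀ 1
  have hA : coeff t ((rho K P₀) 1) = a (r, j) := by
    rw [hP0, map_sum]
    have : ((∑ p ∈ a.support, (rho K) (a p • (wx K ^ p.1 * wy K ^ p.2))) 1) =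
        ∑ p ∈ a.support, a p • ((rho K (wx K ^ p.1 * wy K ^ p.2)) 1) := by
      rw [LinearMap.sum_apply]
      refine Finset.sum_congr rfl fun p _ => ?_
      rw [map_smul, LinearMap.smul_apply]
    rw [this, MvPolynomial.coeff_sum]
    have : ∀ p ∈ a.support, a p • coeff t ((rho K (wx K ^ p.1 * wy K ^ p.2)) 1) =
        if p = (r, j) then a p else 0 := by
      intro p _
      rw [hmono, coeff_XX]
      by_cases hpe : p = (r, j)
      · subst hpe; simp [ht]
      · rw [if_neg, if_neg hpe, smul_zero]
        intro hc
        apply hpe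
        have h0 := DFunLike.congr_fun hc 0
        have h1 := DFunLike.congr_fun hc 1
        simp [ht, Finsupp.single_apply] at h0 h1
        exact Prod.ext h0 h1
    simp only [MvPolynomial.coeff_smul]
    rw [Finset.sum_congr rfl this, Finset.sum_ite_eq' a.support (r, j) (fun p => a p)]
    split
    · rfl
    · next h => exact (Finsupp.notMem_support_iff.mp h).symm
  -- coefficient of t in rho (β P₀) 1
  have hB : coeff t ((rho K (β P₀)) 1) = (-1 : K) ^ j * a (r, j) := by
    have hβsum : β P₀ = ∑ p ∈ a.support, a p • ((-1 : K) ^ p.2 • (wy K ^ p.2 * wx K ^ p.1)) := by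
      rw [hP0, ← hβL, map_sum]
      refine Finset.sum_congr rfl fun p _ => ?_
      rw [hβL, hβ.2.1, hβ.2.2.1, beta_pow K hβ, beta_pow K hβ, hβ.2.2.2.2.1, hβ.2.2.2.2.2]
      rw [← neg_one_smul K (wy K), smul_pow, smul_mul_assoc]
    rw [hβsum, map_sum]
    have hterm : ∀ p ∈ a.support,
        coeff t (((rho K) (a p • ((-1 : K) ^ p.2 • (wy K ^ p.2 * wx K ^ p.1)))) 1) =
          a p * ((-1 : K) ^ p.2 * (if p = (r, j) then 1 else 0)) := by
      intro p hp
      rw [map_smul, map_smul, map_mul, map_pow, map_pow, rho_wx, rho_wy]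
      rw [LinearMap.smul_apply, LinearMap.smul_apply, Module.End.mul_apply]
      rw [opX, LinearMap.pow_mulLeft, LinearMap.mulLeft_apply, mul_one]
      rw [MvPolynomial.coeff_smul, MvPolynomial.coeff_smul]
      rw [key_s8 K p.2 p.1 t (by rw [ht0]; exact hr p hp), coeff_XX]
      have : (Finsupp.single 0 p.1 + Finsupp.single 1 p.2 = t) ↔ p = (r, j) := by
        constructor
        · intro hc
          have h0 := DFunLike.congr_fun hc 0
          have h1 := DFunLike.congr_fun hc 1
          simp [ht, Finsupp.single_apply] at h0 h1
          exact Prod.ext h0 h1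
        · rintro rfl; rfl
      rw [if_congr this rfl rfl]
      simp [smul_eq_mul]
    rw [LinearMap.sum_apply, MvPolynomial.coeff_sum, Finset.sum_congr rfl hterm]
    simp only [mul_ite, mul_one, mul_zero]
    rw [Finset.sum_ite_eq' a.support (r, j) (fun p => a p * (-1 : K) ^ p.2)]
    split
    · ring
    · next h => rw [Finsupp.notMem_support_iff.mp h]; ring
  rw [hP, hA] at hB
  rw [hj.neg_one_pow] at hB
  have : (2 : K) * a (r, j) = 0 := by linear_combination hB
  exact (mul_eq_zero.mp this).resolve_left hK
end

section
/- Let K be a field of characteristic zero. If P₀ ∈ A₁(K) satisfies β(P₀) = P₀ (where β(x)=x, β(y)=-y) and deg_x(P₀) = 0, i.e., P₀ ∈ K[y²], then for every P₁ ∈ A₁(K) the commutator [P₀, P₁] is not a nonzero scalar. -/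
open scoped BigOperators

variable (K : Type*) [Field K]

namespace WeylAux

open Polynomial

/-- Differentiation as an endomorphism of `K[t]`. -/
noncomputable def Dop : Module.End K (Polynomial K) := Polynomial.derivative

/-- Multiplication operators on `K[t]`. -/
noncomputable def lmulP : Polynomial K →ₐ[K] Module.End K (Polynomial K) :=
  Algebra.lmul K (Polynomial K)

lemma rel1 : Dop K * lmulP K X = lmulP K X * Dop K + 1 := by
  refine LinearMap.ext fun f => ?_
  simp [Dop, lmulP, Module.End.mul_apply, mul_comm]

lemma Dop_lmul (g : Polynomial K) :
    Dop K * lmulP K g = lmulP K g * Dop K + lmulP K (derivative g) := by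
  refine LinearMap.ext fun f => ?_
  simp [Dop, lmulP, Module.End.mul_apply, derivative_mul, add_comm]

/-- Coefficientwise differentiation on `K[t][y]`. -/
noncomputable def dmap : Polynomial (Polynomial K) → Polynomial (Polynomial K) :=
  fun Q => ⟨Finsupp.mapRange (fun g => Polynomial.derivative g) (map_zero _) Q.toFinsupp.coeff |> AddMonoidAlgebra.ofCoeff⟩

lemma coeff_dmap (Q : Polynomial (Polynomial K)) (n : ℕ) :
    (dmap K Q).coeff n = Polynomial.derivative (Q.coeff n) := rfl

lemma dmap_add (Q R : Polynomial (Polynomial K)) : dmap K (Q + R) = dmap K Q + dmap K R := by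
  ext n; simp [coeff_dmap]

lemma dmap_monomial (j : ℕ) (f : Polynomial K) :
    dmap K (monomial j f) = monomial j (derivative f) := by
  ext n; simp [coeff_dmap, coeff_monomial]; split <;> simp

lemma dmap_mul_X (Q : Polynomial (Polynomial K)) : dmap K (Q * X) = dmap K Q * X := by
  ext n
  cases n with
  | zero => simp [coeff_dmap, coeff_mul_X_pow']
  | succ m => simp [coeff_dmap, coeff_mul_X]

/-- The "normal form" assignment `∑ fⱼ(t)·yʲ ↦ ∑ (mult by fⱼ) ∘ (d/dt)ʲ`. -/
noncomputable def T : Polynomial (Polynomial K) → Module.End K (Polynomial K) :=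
  fun Q => Polynomial.eval₂ (lmulP K).toRingHom (Dop K) Q

lemma T_add (Q R) : T K (Q + R) = T K Q + T K R := by simp [T, eval₂_add]
lemma T_sub (Q R) : T K (Q - R) = T K Q - T K R := by simp [T, eval₂_sub]
lemma T_monomial (j f) : T K (monomial j f) = lmulP K f * Dop K ^ j := by simp [T, eval₂_monomial]
lemma T_mul_X (Q) : T K (Q * X) = T K Q * Dop K := by simp [T, eval₂_mul_X]
lemma T_zero : T K 0 = 0 := by simp [T]
lemma T_C (f) : T K (C f) = lmulP K f := by simp [T]

lemma T_smul (a : K) (Q) : T K (a • Q) = a • T K Q := by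
  induction Q using Polynomial.induction_on' with
  | add p q hp hq => rw [smul_add, T_add, hp, hq, T_add, smul_add]
  | monomial j f =>
    rw [smul_monomial, T_monomial, T_monomial, map_smul, smul_mul_assoc]

lemma T_sum {ι : Type*} (s : Finset ι) (f : ι → Polynomial (Polynomial K)) :
    T K (∑ i ∈ s, f i) = ∑ i ∈ s, T K (f i) := by
  classical
  induction s using Finset.induction_on with
  | empty => simp [T]
  | insert _ _ h ih => rw [Finset.sum_insert h, Finset.sum_insert h, T_add, ih]

lemma Dop_mul_T (Q) : Dop K * T K Q = T K (dmap K Q + Q * X) := by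
  induction Q using Polynomial.induction_on' with
  | add p q hp hq =>
    rw [T_add, mul_add, hp, hq, ← T_add]
    congr 1
    rw [dmap_add, add_mul]
    ring
  | monomial j f =>
    rw [T_monomial, dmap_monomial, T_add, T_mul_X, T_monomial, T_monomial,
      ← mul_assoc, Dop_lmul, add_mul]
    rw [add_comm, mul_assoc, mul_assoc]
    congr 2
    rw [← pow_succ, ← pow_succ']

lemma lmul_mul_T (f) (Q) : lmulP K f * T K Q = T K (C f * Q) := by
  induction Q using Polynomial.induction_on' with
  | add p q hp hq => rw [T_add, mul_add, hp, hq, mul_add, T_add]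
  | monomial j g =>
    rw [T_monomial, C_mul_monomial, T_monomial, ← mul_assoc, map_mul]

lemma T_mul_X_pow (Q) (k : ℕ) : T K (Q * X ^ k) = T K Q * Dop K ^ k := by
  induction k with
  | zero => simp
  | succ n ih => rw [pow_succ, ← mul_assoc, T_mul_X, ih, pow_succ, mul_assoc]

lemma Dop_pow_mul_T (j : ℕ) (Q) : ∃ R, Dop K ^ j * T K Q = T K R := by
  induction j generalizing Q with
  | zero => exact ⟨Q, by simp⟩
  | succ n ih =>
    obtain ⟨R, hR⟩ := ih (dmap K Q + Q * X)
    exact ⟨R, by rw [pow_succ, mul_assoc, Dop_mul_T, hR]⟩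

lemma T_mul_mem (Q₁ Q₂) : ∃ R, T K Q₁ * T K Q₂ = T K R := by
  induction Q₁ using Polynomial.induction_on' with
  | add p q hp hq =>
    obtain ⟨R₁, h₁⟩ := hp; obtain ⟨R₂, h₂⟩ := hq
    exact ⟨R₁ + R₂, by rw [T_add, add_mul, h₁, h₂, T_add]⟩
  | monomial j f =>
    obtain ⟨R, hR⟩ := Dop_pow_mul_T K j Q₂
    exact ⟨C f * R, by rw [T_monomial, mul_assoc, hR, lmul_mul_T]⟩

lemma T_apply (Q : Polynomial (Polynomial K)) (v : Polynomial K) :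
    T K Q v = ∑ i ∈ Q.support, Q.coeff i * (derivative)^[i] v := by
  rw [T, eval₂_eq_sum, Polynomial.sum, LinearMap.coe_sum, Finset.sum_apply]
  refine Finset.sum_congr rfl fun i _ => ?_
  simp [lmulP, Dop, Module.End.mul_apply, Module.End.pow_apply]

lemma T_inj [CharZero K] (Q : Polynomial (Polynomial K)) (h : T K Q = 0) : Q = 0 := by
  have key : ∀ j, Q.coeff j = 0 := by
    intro j
    induction j using Nat.strong_induction_on with
    | _ j ih =>
    have h0 := congrArg (fun M : Module.End K (Polynomial K) => M (X ^ j)) h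
    simp only [T_apply, LinearMap.zero_apply] at h0
    rw [Finset.sum_eq_single j] at h0
    · by_cases hj : j ∈ Q.support
      · rw [iterate_derivative_X_pow_eq_smul, Nat.sub_self, pow_zero,
          Nat.descFactorial_self] at h0
        rw [Algebra.smul_def, mul_one] at h0
        have hfact : (algebraMap K (Polynomial K)) (j.factorial : K) ≠ 0 := by
          simp only [ne_eq, _root_.map_eq_zero]
          exact Nat.cast_ne_zero.mpr (Nat.factorial_ne_zero j)
        exact (mul_eq_zero.mp h0).resolve_right hfact
      · exact Polynomial.notMem_support_iff.mp hj
    · intro i hi hij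
      rcases lt_or_gt_of_ne hij with hlt | hgt
      · rw [ih i hlt, zero_mul]
      · rw [iterate_derivative_eq_zero (by simpa using hgt), mul_zero]
    · intro hj
      rw [Polynomial.notMem_support_iff.mp hj, zero_mul]
  ext j : 1
  simp [key]

noncomputable def leftD2 (R : Polynomial (Polynomial K)) : Polynomial (Polynomial K) :=
  dmap K (dmap K R) + 2 • (dmap K R * X) + R * X ^ 2

lemma D2_mul_T (R) : Dop K ^ 2 * T K R = T K (leftD2 K R) := by
  have h1 : Dop K ^ 2 = Dop K * Dop K := sq (Dop K)
  rw [h1, mul_assoc, Dop_mul_T, Dop_mul_T, leftD2]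
  congr 1
  rw [dmap_add, dmap_mul_X, add_mul, two_smul]
  ring

lemma comm_D2 (Q) : Dop K ^ 2 * T K Q - T K Q * Dop K ^ 2
    = T K (dmap K (dmap K Q) + 2 • (dmap K Q * X)) := by
  rw [D2_mul_T, ← T_mul_X_pow, ← T_sub, leftD2]
  congr 1
  ring

lemma ring_expand {A : Type*} [Ring A] (a b m : A) :
    a*b*m - m*(a*b) = a*(b*m - m*b) + (a*m - m*a)*b := by noncomm_ring

lemma comm_pow (l : ℕ) (Q : Polynomial (Polynomial K)) (d : ℕ) (hQ : Q.natDegree ≤ d) :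
    ∃ F, Dop K ^ (2*l) * T K Q - T K Q * Dop K ^ (2*l) = T K F ∧
      (∀ e, 2*l + d ≤ e → F.coeff e = 0) ∧
      F.coeff (2*l + d - 1) = (2*l) • Polynomial.derivative (Q.coeff d) := by
  induction l with
  | zero =>
    refine ⟨0, by simp [T], fun e _ => by simp, by simp⟩
  | succ l ih =>
    obtain ⟨F, hF, hvan, hval⟩ := ih
    set G : Polynomial (Polynomial K) := dmap K (dmap K Q) + 2 • (dmap K Q * X) with hG
    have hGcoeff : ∀ m, d + 1 < m → G.coeff m = 0 := by
      intro m hm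
      obtain ⟨m', rfl⟩ : ∃ m', m = m' + 1 := ⟨m - 1, by omega⟩
      have hq1 : Q.coeff (m' + 1) = 0 := coeff_eq_zero_of_natDegree_lt (by omega)
      have hq2 : Q.coeff m' = 0 := coeff_eq_zero_of_natDegree_lt (by omega)
      simp [hG, coeff_dmap, coeff_mul_X, hq1, hq2]
    have hGval : G.coeff (d + 1) = 2 • Polynomial.derivative (Q.coeff d) := by
      have hq1 : Q.coeff (d + 1) = 0 := coeff_eq_zero_of_natDegree_lt (by omega)
      simp [hG, coeff_dmap, coeff_mul_X, hq1]
    refine ⟨leftD2 K F + G * X ^ (2*l), ?_, ?_, ?_⟩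
    · have hpow : Dop K ^ (2*(l+1)) = Dop K ^ 2 * Dop K ^ (2*l) := by
        rw [← pow_add]; ring_nf
      rw [hpow, ring_expand, hF, comm_D2, D2_mul_T, ← hG, ← T_mul_X_pow, T_add]
    · intro e he
      have ha : (dmap K (dmap K F)).coeff e = 0 := by
        rw [coeff_dmap, coeff_dmap, hvan _ (by omega)]; simp
      have hb : (dmap K F * X).coeff e = 0 := by
        obtain ⟨m, rfl⟩ : ∃ m, e = m + 1 := ⟨e - 1, by omega⟩
        rw [coeff_mul_X, coeff_dmap, hvan _ (by omega)]; simp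
      have hc : (F * X ^ 2).coeff e = 0 := by
        rw [coeff_mul_X_pow', if_pos (by omega), hvan _ (by omega)]
      have h2 : (G * X ^ (2*l)).coeff e = 0 := by
        rw [coeff_mul_X_pow', if_pos (by omega), hGcoeff _ (by omega)]
      simp [leftD2, ha, hb, hc, h2]
    · have hE : 2*(l+1) + d - 1 = 2*l + d + 1 := by omega
      rw [hE]
      have ha : (dmap K (dmap K F)).coeff (2*l + d + 1) = 0 := by
        rw [coeff_dmap, coeff_dmap, hvan _ (by omega)]; simp
      have hb : (dmap K F * X).coeff (2*l + d + 1) = 0 := by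
        rw [coeff_mul_X, coeff_dmap, hvan _ (by omega)]; simp
      have hc : (F * X ^ 2).coeff (2*l + d + 1) = (2*l) • Polynomial.derivative (Q.coeff d) := by
        rw [coeff_mul_X_pow']
        split
        · have : 2*l + d + 1 - 2 = 2*l + d - 1 := by omega
          rw [this, hval]
        · have hl : l = 0 := by omega
          simp [hl]
      have h2 : (G * X ^ (2*l)).coeff (2*l + d + 1) = 2 • Polynomial.derivative (Q.coeff d) := by
        rw [coeff_mul_X_pow', if_pos (by omega)]
        have : 2*l + d + 1 - 2*l = d + 1 := by omega
        rw [this, hGval]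
      rw [coeff_add, leftD2, coeff_add, coeff_add, ha, coeff_smul, hb, hc, h2, smul_zero,
        add_zero, zero_add, ← add_nsmul]
      congr 1

lemma commute_aeval (p : Polynomial K) (k : ℕ) :
    Commute ((Dop K)^k) (Polynomial.aeval ((Dop K)^2) p) := by
  rw [aeval_eq_sum_range]
  refine Commute.sum_right _ _ _ fun i _ => Commute.smul_right ?_ _
  exact ((Commute.refl (Dop K)).pow_pow k 2).pow_right i

lemma comm_aeval (p : Polynomial K) (Q : Polynomial (Polynomial K)) (d : ℕ)
    (hQ : Q.natDegree ≤ d) :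
    ∃ F, Polynomial.aeval ((Dop K)^2) p * T K Q - T K Q * Polynomial.aeval ((Dop K)^2) p = T K F ∧
      (∀ e, 2*p.natDegree + d ≤ e → F.coeff e = 0) ∧
      F.coeff (2*p.natDegree + d - 1)
        = (2*p.natDegree) • (p.leadingCoeff • Polynomial.derivative (Q.coeff d)) := by
  classical
  have hch := fun l => comm_pow K l Q d hQ
  choose F hF hvan hval using hch
  set r := p.natDegree with hr
  refine ⟨∑ l ∈ Finset.range (r+1), p.coeff l • F l, ?_, ?_, ?_⟩
  · rw [aeval_eq_sum_range, Finset.sum_mul, Finset.mul_sum, ← Finset.sum_sub_distrib, T_sum]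
    refine Finset.sum_congr rfl fun l _ => ?_
    rw [T_smul, smul_mul_assoc, mul_smul_comm, ← smul_sub, ← pow_mul, hF]
  · intro e he
    rw [finset_sum_coeff]
    refine Finset.sum_eq_zero fun l hl => ?_
    rw [coeff_smul, hvan l e (by simp at hl; omega)]
    simp
  · rw [finset_sum_coeff, Finset.sum_eq_single r]
    · rw [coeff_smul, hval, smul_comm, Polynomial.leadingCoeff, ← hr]
    · intro l hl hlr
      have hl' : l < r := by simp at hl; omega
      rw [coeff_smul, hvan l _ (by omega)]
      simp
    · intro h
      exact absurd (Finset.self_mem_range_succ r) h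

/-- The standard representation of the Weyl algebra on `K[t]`. -/
noncomputable def Phi : Weyl K →ₐ[K] Module.End K (Polynomial K) :=
  RingQuot.liftAlgHom K ⟨FreeAlgebra.lift K ![lmulP K X, Dop K], by
    intro a b h
    cases h
    simp only [map_mul, map_add, map_one, FreeAlgebra.lift_ι_apply]
    show Dop K * lmulP K X = lmulP K X * Dop K + 1
    exact rel1 K⟩

lemma Phi_wx : Phi K (wx K) = lmulP K X := by
  rw [Phi, wx, RingQuot.liftAlgHom_mkAlgHom_apply, FreeAlgebra.lift_ι_apply]
  rfl

lemma Phi_wy : Phi K (wy K) = Dop K := by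
  rw [Phi, wy, RingQuot.liftAlgHom_mkAlgHom_apply, FreeAlgebra.lift_ι_apply]
  rfl

lemma T_one : T K 1 = 1 := by simp [T]

lemma T_algebraMap (a : K) : T K (C (C a)) = algebraMap K (Module.End K (Polynomial K)) a := by
  rw [T_C]
  show lmulP K (algebraMap K (Polynomial K) a) = _
  rw [AlgHom.commutes]

lemma Phi_range (u : Weyl K) : ∃ Q, Phi K u = T K Q := by
  obtain ⟨F, rfl⟩ := RingQuot.mkAlgHom_surjective K (WeylRel K) u
  induction F using FreeAlgebra.induction with
  | grade0 r =>
    exact ⟨C (C r), by rw [AlgHom.commutes, AlgHom.commutes, T_algebraMap]⟩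
  | grade1 x =>
    fin_cases x
    · refine ⟨C X, ?_⟩
      show Phi K (wx K) = T K (C X)
      rw [Phi_wx, T_C]
    · refine ⟨X, ?_⟩
      show Phi K (wy K) = T K X
      rw [Phi_wy]
      rw [← pow_one (X : Polynomial (Polynomial K)), X_pow_eq_monomial, T_monomial]
      simp
  | mul a b ha hb =>
    obtain ⟨Qa, hQa⟩ := ha; obtain ⟨Qb, hQb⟩ := hb
    obtain ⟨R, hR⟩ := T_mul_mem K Qa Qb
    exact ⟨R, by rw [map_mul, map_mul, hQa, hQb, hR]⟩
  | add a b ha hb =>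
    obtain ⟨Qa, hQa⟩ := ha; obtain ⟨Qb, hQb⟩ := hb
    exact ⟨Qa + Qb, by rw [map_add, map_add, hQa, hQb, T_add]⟩

lemma nsmul_smul_eq_zero_imp [CharZero K] (n : ℕ) (hn : n ≠ 0) (a : K) (ha : a ≠ 0)
    (v : Polynomial K) (h : n • (a • v) = 0) : v = 0 := by
  have h1 : ((n : K) * a) • v = 0 := by
    rw [mul_smul, ← h, Nat.cast_smul_eq_nsmul]
  rcases smul_eq_zero.mp h1 with h2 | h2
  · exact absurd h2 (mul_ne_zero (Nat.cast_ne_zero.mpr hn) ha)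
  · exact h2

/-- Main inductive lemma: no element in the image of `T` has commutator with
`p((d/dt)²)` equal to a nonzero scalar. -/
lemma main [CharZero K] (p : Polynomial K) (hp : 1 ≤ p.natDegree) (c : K) (hc : c ≠ 0) :
    ∀ d (Q : Polynomial (Polynomial K)), Q.natDegree ≤ d →
      Polynomial.aeval ((Dop K)^2) p * T K Q - T K Q * Polynomial.aeval ((Dop K)^2) p
        ≠ algebraMap K (Module.End K (Polynomial K)) c := by
  intro d
  induction d with
  | zero =>
    intro Q hQ heq
    obtain ⟨F, hF, hvan, hval⟩ := comm_aeval K p Q 0 hQ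
    rw [hF, ← T_algebraMap] at heq
    have hFeq : F = C (C c) := by
      have h' := T_inj K (F - C (C c)) (by rw [T_sub, heq, sub_self])
      exact sub_eq_zero.mp h'
    -- coefficient of F at 2r - 1 ≥ 1 vanishes, giving derivative (Q.coeff 0) = 0
    have hcoeff : F.coeff (2*p.natDegree + 0 - 1) = 0 := by
      rw [hFeq, coeff_C, if_neg (by omega)]
    rw [hval] at hcoeff
    have hder : Polynomial.derivative (Q.coeff 0) = 0 :=
      nsmul_smul_eq_zero_imp K _ (by omega) _ (Polynomial.leadingCoeff_ne_zero.mpr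
        (fun h0 => by simp [h0] at hp)) _ hcoeff
    -- so Q is a scalar and the commutator is zero
    obtain ⟨α, hα⟩ : ∃ α, Q.coeff 0 = C α := by
      have := Polynomial.natDegree_eq_zero_of_derivative_eq_zero hder
      exact (Polynomial.natDegree_eq_zero.mp this).imp fun a ha => ha.symm
    have hQeq : Q = C (C α) := by
      rw [← hα]
      exact Polynomial.eq_C_of_natDegree_le_zero hQ
    have hfinal : algebraMap K (Module.End K (Polynomial K)) c = 0 := by
      rw [← T_algebraMap, ← heq, ← hF, hQeq, T_algebraMap, Algebra.commutes α, sub_self]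
    have : c = 0 := by
      have h1 := congrArg (fun M : Module.End K (Polynomial K) => M 1) hfinal
      simp only [LinearMap.zero_apply, Module.algebraMap_end_apply] at h1
      simpa using h1
    exact hc this
  | succ d ih =>
    intro Q hQ heq
    obtain ⟨F, hF, hvan, hval⟩ := comm_aeval K p Q (d+1) hQ
    rw [hF, ← T_algebraMap] at heq
    have hFeq : F = C (C c) := by
      have h' := T_inj K (F - C (C c)) (by rw [T_sub, heq, sub_self])
      exact sub_eq_zero.mp h'
    have hcoeff : F.coeff (2*p.natDegree + (d+1) - 1) = 0 := by
      rw [hFeq, coeff_C, if_neg (by omega)]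
    rw [hval] at hcoeff
    have hder : Polynomial.derivative (Q.coeff (d+1)) = 0 :=
      nsmul_smul_eq_zero_imp K _ (by omega) _ (Polynomial.leadingCoeff_ne_zero.mpr
        (fun h0 => by simp [h0] at hp)) _ hcoeff
    obtain ⟨α, hα⟩ : ∃ α, Q.coeff (d+1) = C α := by
      have := Polynomial.natDegree_eq_zero_of_derivative_eq_zero hder
      exact (Polynomial.natDegree_eq_zero.mp this).imp fun a ha => ha.symm
    -- split off the top monomial
    set Q' := Q.erase (d+1) with hQ'
    have hsplit : Q = monomial (d+1) (C α) + Q' := by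
      rw [hQ', ← hα, Polynomial.monomial_add_erase]
    have hQ'deg : Q'.natDegree ≤ d := by
      rw [Polynomial.natDegree_le_iff_coeff_eq_zero]
      intro N hN
      rw [hQ', Polynomial.coeff_erase]
      split
      · rfl
      · exact coeff_eq_zero_of_natDegree_lt (by omega)
    -- operator piece for the top monomial commutes with aeval
    have hcomm : Polynomial.aeval ((Dop K)^2) p * T K (monomial (d+1) (C α)) -
        T K (monomial (d+1) (C α)) * Polynomial.aeval ((Dop K)^2) p = 0 := by
      rw [T_monomial]
      have h1 : lmulP K ((C α : Polynomial K)) = algebraMap K (Module.End K (Polynomial K)) α :=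
        AlgHom.commutes _ _
      rw [h1]
      have hcm : Commute (Polynomial.aeval ((Dop K)^2) p)
          (algebraMap K (Module.End K (Polynomial K)) α * Dop K ^ (d+1)) := by
        refine Commute.mul_right (Algebra.commutes α _).symm ?_
        exact (commute_aeval K p (d+1)).symm
      rw [hcm.eq, sub_self]
    have hnew : Polynomial.aeval ((Dop K)^2) p * T K Q' -
        T K Q' * Polynomial.aeval ((Dop K)^2) p
          = algebraMap K (Module.End K (Polynomial K)) c := by
      have hTQ : T K Q = T K (monomial (d+1) (C α)) + T K Q' := by
        rw [hsplit, T_add]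
      have hfull : Polynomial.aeval ((Dop K)^2) p * T K Q -
          T K Q * Polynomial.aeval ((Dop K)^2) p
            = algebraMap K (Module.End K (Polynomial K)) c := by
        rw [hF, heq, T_algebraMap]
      have hexp : Polynomial.aeval ((Dop K)^2) p * T K Q' -
          T K Q' * Polynomial.aeval ((Dop K)^2) p
          = (Polynomial.aeval ((Dop K)^2) p * T K Q - T K Q * Polynomial.aeval ((Dop K)^2) p)
            - (Polynomial.aeval ((Dop K)^2) p * T K (monomial (d+1) (C α)) -
               T K (monomial (d+1) (C α)) * Polynomial.aeval ((Dop K)^2) p) := by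
        rw [hTQ]; noncomm_ring
      rw [hexp, hfull, hcomm, sub_zero]
    exact ih Q' hQ'deg hnew
end WeylAux

theorem stmt_12 [CharZero K] (β : Weyl K → Weyl K) (hβ : IsBetaInv K β)
    (hinv : ∀ u, β (β u) = u) (P₀ : Weyl K) (h0 : β P₀ = P₀)
    (hdeg : ∃ p : Polynomial K, P₀ = Polynomial.aeval (wy K * wy K) p) :
    ∀ (P₁ : Weyl K) (c : K), c ≠ 0 → P₀ * P₁ - P₁ * P₀ ≠ algebraMap K (Weyl K) c := by
  intro P₁ c hc heq
  obtain ⟨p, hp0⟩ := hdeg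
  have hmap := congrArg (WeylAux.Phi K) heq
  rw [map_sub, map_mul, map_mul, AlgHom.commutes] at hmap
  have hP0 : WeylAux.Phi K P₀ = Polynomial.aeval ((WeylAux.Dop K)^2) p := by
    rw [hp0, ← Polynomial.aeval_algHom_apply]
    congr 1
    rw [map_mul, WeylAux.Phi_wy, sq]
  obtain ⟨Q, hQv⟩ := WeylAux.Phi_range K P₁
  rw [hP0, hQv] at hmap
  by_cases hdp : 1 ≤ p.natDegree
  · exact WeylAux.main K p hdp c hc Q.natDegree Q le_rfl hmap
  · have hd0 : p.natDegree = 0 := by omega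
    obtain ⟨a, ha⟩ := Polynomial.natDegree_eq_zero.mp hd0
    rw [← ha, Polynomial.aeval_C, Algebra.commutes a, sub_self] at hmap
    have : c = 0 := by
      have h1 := congrArg (fun M : Module.End K (Polynomial K) => M 1) hmap
      simp only [LinearMap.zero_apply, Module.algebraMap_end_apply] at h1
      simpa using h1.symm
    exact hc this
end
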